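/- Partition Theorem: For every treelike model ⟨X,𝒪,i⟩ and every formula ψ of the bimodal language (atoms, ¬, ∧, K, □), there exists a finite intersection-closed family ℱ^ψ ⊆ 𝒫(X) containing X that is a stable partition for ψ, and such that ℱ^φ ⊆ ℱ^ψ whenever φ is a subformula of ψ. -/

import Mathlib

inductive Fml (α : Type) : Type
  | atom : α → Fml α
  | neg : Fml α → Fml α
  | and : Fml α → Fml α → Fml α
  | K : Fml α → Fml α
  | box : Fml α → Fml α

def Fml.imp {α : Type} (φ ψ : Fml α) : Fml α := (φ.and ψ.neg).neg
def Fml.or {α : Type} (φ ψ : Fml α) : Fml α := (φ.neg.and ψ.neg).neg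
def Fml.dia {α : Type} (φ : Fml α) : Fml α := φ.neg.box.neg
def Fml.L {α : Type} (φ : Fml α) : Fml α := φ.neg.K.neg

/-- Satisfaction in a subset model `⟨X, O, i⟩` at a pair `(x, U)`. -/
def Sat {X α : Type} (O : Set (Set X)) (i : α → Set X) : X → Set X → Fml α → Prop
  | x, _, .atom A => x ∈ i A
  | x, U, .neg φ => ¬ Sat O i x U φ
  | x, U, .and φ ψ => Sat O i x U φ ∧ Sat O i x U ψ
  | x, U, .K φ => ∀ y ∈ U, Sat O i y U φ
  | x, U, .box φ => ∀ V ∈ O, x ∈ V → V ⊆ U → Sat O i x V φ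

/-- A treelike space: `X ∈ O` and any two members of `O` are comparable or disjoint. -/
def Treelike {X : Type} (O : Set (Set X)) : Prop :=
  Set.univ ∈ O ∧ ∀ U ∈ O, ∀ V ∈ O, U ⊆ V ∨ V ⊆ U ∨ U ∩ V = ∅

/-- `down O U` = the members of `O` contained in `U`. -/
def down {X : Type} (O : Set (Set X)) (U : Set X) : Set (Set X) := {V ∈ O | V ⊆ U}

/-- The remainder `Rem(ℱ, U) = ↓U \ ⋃_{¬ U ⊆ W, W ∈ ℱ} ↓W`. -/
def Rem {X : Type} (O F : Set (Set X)) (U : Set X) : Set (Set X) :=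
  {V | V ∈ down O U ∧ ∀ W ∈ F, ¬ U ⊆ W → ¬ V ⊆ W}

/-- Closure under binary intersections. -/
def InterClosed {X : Type} (F : Set (Set X)) : Prop := ∀ U ∈ F, ∀ V ∈ F, U ∩ V ∈ F

/-- `G` is stable for `φ`: for each point `x`, the truth value of `φ` at `(x,V)`
is the same for all `V ∈ G` containing `x`. -/
def Stable {X α : Type} (O : Set (Set X)) (i : α → Set X) (G : Set (Set X)) (φ : Fml α) : Prop :=
  ∀ x : X, (∀ V ∈ G, x ∈ V → Sat O i x V φ) ∨ (∀ V ∈ G, x ∈ V → ¬ Sat O i x V φ)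

/-- Subformula relation. -/
inductive Subf {α : Type} : Fml α → Fml α → Prop
  | refl (φ : Fml α) : Subf φ φ
  | neg {φ ψ : Fml α} : Subf φ ψ → Subf φ ψ.neg
  | andL {φ ψ χ : Fml α} : Subf φ ψ → Subf φ (ψ.and χ)
  | andR {φ ψ χ : Fml α} : Subf φ χ → Subf φ (ψ.and χ)
  | K {φ ψ : Fml α} : Subf φ ψ → Subf φ ψ.K
  | box {φ ψ : Fml α} : Subf φ ψ → Subf φ ψ.box


namespace PartitionAux

variable {X α : Type}

/-- Closure of a family under nonempty intersections. -/
def icl (S : Set (Set X)) : Set (Set X) :=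
  {T | ∃ G : Set (Set X), G ⊆ S ∧ G.Nonempty ∧ T = ⋂₀ G}

lemma subset_icl {S : Set (Set X)} : S ⊆ icl S := by
  intro U hU
  exact ⟨{U}, by simpa using hU, ⟨U, rfl⟩, by simp⟩

lemma icl_finite {S : Set (Set X)} (h : S.Finite) : (icl S).Finite := by
  have hsub : icl S ⊆ (fun G => ⋂₀ G) '' {G | G ⊆ S} := by
    rintro T ⟨G, hG, _, rfl⟩
    exact ⟨G, hG, rfl⟩
  exact ((h.finite_subsets).image _).subset hsub

lemma icl_interClosed (S : Set (Set X)) : InterClosed (icl S) := by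
  rintro U ⟨G₁, h₁, n₁, rfl⟩ V ⟨G₂, h₂, n₂, rfl⟩
  refine ⟨G₁ ∪ G₂, Set.union_subset h₁ h₂, n₁.mono Set.subset_union_left, ?_⟩
  rw [Set.sInter_union]

lemma sInter_mem {F : Set (Set X)} (hfin : F.Finite) (hIC : InterClosed F)
    {G : Set (Set X)} (hGF : G ⊆ F) (hne : G.Nonempty) : ⋂₀ G ∈ F := by
  have hGfin : G.Finite := hfin.subset hGF
  refine Set.Finite.induction_on (motive := fun G _ => G ⊆ F → G.Nonempty → ⋂₀ G ∈ F) G hGfin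
    (fun _ h => absurd h (by simp)) ?_ hGF hne
  intro a s _ _ ih hsub hne'
  have haF : a ∈ F := hsub (Set.mem_insert _ _)
  have hsF : s ⊆ F := fun x hx => hsub (Set.mem_insert_of_mem _ hx)
  rcases s.eq_empty_or_nonempty with rfl | hsne
  · simpa using haF
  · rw [Set.sInter_insert]
    exact hIC a haF _ (ih hsF hsne)

/-- The smallest member of `F` containing `S`. -/
def mcl (F : Set (Set X)) (S : Set X) : Set X := ⋂₀ {W ∈ F | S ⊆ W}

lemma mcl_mem {F : Set (Set X)} (hfin : F.Finite) (hIC : InterClosed F)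
    (huniv : Set.univ ∈ F) (S : Set X) : mcl F S ∈ F :=
  sInter_mem hfin hIC (Set.sep_subset _ _) ⟨Set.univ, huniv, Set.subset_univ _⟩

lemma subset_mcl {F : Set (Set X)} {S : Set X} : S ⊆ mcl F S := by
  intro x hx
  exact Set.mem_sInter.2 fun W hW => hW.2 hx

lemma mcl_le {F : Set (Set X)} {S W : Set X} (hW : W ∈ F) (h : S ⊆ W) : mcl F S ⊆ W :=
  Set.sInter_subset_of_mem ⟨hW, h⟩

lemma rem_subset_rem {O F F' : Set (Set X)} (hfin : F.Finite) (hIC : InterClosed F)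
    (huniv : Set.univ ∈ F) (hFF' : F ⊆ F') (U' : Set X) :
    Rem O F' U' ⊆ Rem O F (mcl F U') := by
  rintro V ⟨⟨hVO, hVU'⟩, hV⟩
  refine ⟨⟨hVO, hVU'.trans subset_mcl⟩, ?_⟩
  intro W hW hnW hVW
  have hU'W : U' ⊆ W := by
    by_contra hc
    exact hV W (hFF' hW) hc hVW
  exact hnW (mcl_le hW hU'W)

lemma stable_mono {O : Set (Set X)} {i : α → Set X} {G G' : Set (Set X)} {φ : Fml α}
    (h : G' ⊆ G) (hS : Stable O i G φ) : Stable O i G' φ := by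
  intro x
  rcases hS x with hs | hs
  · exact Or.inl fun V hV hx => hs V (h hV) hx
  · exact Or.inr fun V hV hx => hs V (h hV) hx

lemma chain_of_mem {O : Set (Set X)} (hT : Treelike O) {U V : Set X}
    (hU : U ∈ O) (hV : V ∈ O) {x : X} (hx : x ∈ U) (hx' : x ∈ V) : U ⊆ V ∨ V ⊆ U := by
  rcases hT.2 U hU V hV with h | h | h
  · exact Or.inl h
  · exact Or.inr h
  · exact absurd (h ▸ (Set.mem_inter hx hx' : x ∈ U ∩ V)) (Set.notMem_empty x)

lemma rem_sandwich {O F : Set (Set X)} {U V₁ V₂ V' : Set X}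
    (h₁ : V₁ ∈ Rem O F U) (h₂ : V₂ ∈ Rem O F U) (hO : V' ∈ O)
    (h1' : V₁ ⊆ V') (h'2 : V' ⊆ V₂) : V' ∈ Rem O F U :=
  ⟨⟨hO, h'2.trans h₂.1.2⟩, fun W hW hnW hVW => h₁.2 W hW hnW (h1'.trans hVW)⟩

/-- The union of the members of `Rem(F,U)` on which `φ` holds everywhere. -/
def good (O : Set (Set X)) (i : α → Set X) (φ : Fml α) (F : Set (Set X)) (U : Set X) :
    Set X :=
  ⋃₀ {V | V ∈ Rem O F U ∧ ∀ y ∈ V, Sat O i y V φ}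

/-- The recursive construction of the stable partitions. -/
def Fam (O : Set (Set X)) (i : α → Set X) : Fml α → Set (Set X)
  | .atom _ => {Set.univ}
  | .neg φ => Fam O i φ
  | .and φ χ => icl (Fam O i φ ∪ Fam O i χ)
  | .K φ => icl (Fam O i φ ∪ (good O i φ (Fam O i φ) '' Fam O i φ))
  | .box φ => Fam O i φ

lemma fam_mono {O : Set (Set X)} {i : α → Set X} {φ ψ : Fml α} (h : Subf φ ψ) :
    Fam O i φ ⊆ Fam O i ψ := by
  induction h with
  | refl => exact subset_rfl
  | neg _ ih => exact ih
  | andL _ ih => exact ih.trans (Set.subset_union_left.trans subset_icl)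
  | andR _ ih => exact ih.trans (Set.subset_union_right.trans subset_icl)
  | K _ ih => exact ih.trans (Set.subset_union_left.trans subset_icl)
  | box _ ih => exact ih

lemma stable_atom {O : Set (Set X)} {i : α → Set X} {G : Set (Set X)} (A : α) :
    Stable O i G (.atom A) := by
  intro x
  by_cases h : x ∈ i A
  · exact Or.inl fun V _ _ => h
  · exact Or.inr fun V _ _ hh => h hh

lemma stable_neg {O : Set (Set X)} {i : α → Set X} {G : Set (Set X)} {φ : Fml α}
    (h : Stable O i G φ) : Stable O i G φ.neg := by
  intro x
  rcases h x with hs | hs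
  · exact Or.inr fun V hV hx hn => hn (hs V hV hx)
  · exact Or.inl fun V hV hx => hs V hV hx

lemma stable_and {O : Set (Set X)} {i : α → Set X} {G : Set (Set X)} {φ χ : Fml α}
    (h1 : Stable O i G φ) (h2 : Stable O i G χ) : Stable O i G (φ.and χ) := by
  intro x
  rcases h1 x with hφ | hφ
  · rcases h2 x with hχ | hχ
    · exact Or.inl fun V hV hx => ⟨hφ V hV hx, hχ V hV hx⟩
    · exact Or.inr fun V hV hx hc => hχ V hV hx hc.2
  · exact Or.inr fun V hV hx hc => hφ V hV hx hc.1

lemma fam_spec (O : Set (Set X)) (i : α → Set X) (hT : Treelike O) (ψ : Fml α) :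
    (Fam O i ψ).Finite ∧ Set.univ ∈ Fam O i ψ ∧ InterClosed (Fam O i ψ) ∧
      ∀ U : Set X, Stable O i (Rem O (Fam O i ψ) U) ψ := by
  induction ψ with
  | atom A =>
      have hA : Fam O i (Fml.atom A) = {Set.univ} := rfl
      rw [hA]
      refine ⟨Set.finite_singleton _, Set.mem_singleton _, ?_, fun U => stable_atom A⟩
      rintro U hU V hV
      simp only [Set.mem_singleton_iff] at hU hV ⊢
      subst hU; subst hV; simp
  | neg φ ih =>
      exact ⟨ih.1, ih.2.1, ih.2.2.1, fun U => stable_neg (ih.2.2.2 U)⟩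
  | and φ χ ihφ ihχ =>
      obtain ⟨hfφ, huφ, hicφ, hsφ⟩ := ihφ
      obtain ⟨hfχ, huχ, hicχ, hsχ⟩ := ihχ
      refine ⟨icl_finite (hfφ.union hfχ), subset_icl (Or.inl huφ), icl_interClosed _, ?_⟩
      intro U
      have trφ : Rem O (Fam O i (φ.and χ)) U ⊆ Rem O (Fam O i φ) (mcl (Fam O i φ) U) :=
        rem_subset_rem hfφ hicφ huφ (Set.subset_union_left.trans subset_icl) U
      have trχ : Rem O (Fam O i (φ.and χ)) U ⊆ Rem O (Fam O i χ) (mcl (Fam O i χ) U) :=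
        rem_subset_rem hfχ hicχ huχ (Set.subset_union_right.trans subset_icl) U
      exact stable_and (stable_mono trφ (hsφ _)) (stable_mono trχ (hsχ _))
  | K φ ih =>
      obtain ⟨hf, hu, hic, hs⟩ := ih
      refine ⟨icl_finite (hf.union (hf.image _)), subset_icl (Or.inl hu),
        icl_interClosed _, ?_⟩
      intro U x
      by_cases hall : ∀ V ∈ Rem O (Fam O i φ.K) U, x ∈ V → Sat O i x V φ.K
      · exact Or.inl hall
      · right
        push_neg at hall
        obtain ⟨V₂, hV₂, hxV₂, hnK⟩ := hall
        intro V₁ hV₁ hxV₁ hK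
        set Fφ := Fam O i φ with hFφ
        set Uh := mcl Fφ U with hUh
        have hUhF : Uh ∈ Fφ := mcl_mem hf hic hu U
        have hsub : Rem O (Fam O i φ.K) U ⊆ Rem O Fφ Uh :=
          rem_subset_rem hf hic hu (Set.subset_union_left.trans subset_icl) U
        have h₁ : V₁ ∈ Rem O Fφ Uh := hsub hV₁
        have h₂ : V₂ ∈ Rem O Fφ Uh := hsub hV₂
        have hK' : ∀ y ∈ V₁, Sat O i y V₁ φ := hK
        have hnK' : ¬ ∀ y ∈ V₂, Sat O i y V₂ φ := hnK
        push_neg at hnK'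
        obtain ⟨y, hy, hny⟩ := hnK'
        rcases chain_of_mem hT h₁.1.1 h₂.1.1 hxV₁ hxV₂ with h12 | h21
        · -- V₁ ⊆ V₂ : use the `good` set
          have hgood : V₁ ⊆ good O i φ Fφ Uh :=
            Set.subset_sUnion_of_mem ⟨h₁, hK'⟩
          have hgoodF : good O i φ Fφ Uh ∈ Fam O i φ.K :=
            subset_icl (Or.inr ⟨Uh, hUhF, rfl⟩)
          have hUg : U ⊆ good O i φ Fφ Uh := by
            by_contra hc
            exact hV₁.2 _ hgoodF hc hgood
          have hyg : y ∈ good O i φ Fφ Uh := hUg (hV₂.1.2 hy)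
          obtain ⟨Vy, ⟨hVyR, hVygood⟩, hyVy⟩ := hyg
          rcases hs Uh y with hst | hst
          · exact hny (hst V₂ h₂ hy)
          · exact hst Vy hVyR hyVy (hVygood y hyVy)
        · -- V₂ ⊆ V₁
          have hy1 : y ∈ V₁ := h21 hy
          rcases hs Uh y with hst | hst
          · exact hny (hst V₂ h₂ hy)
          · exact hst V₁ h₁ hy1 (hK' y hy1)
  | box φ ih =>
      obtain ⟨hf, hu, hic, hs⟩ := ih
      refine ⟨hf, hu, hic, ?_⟩
      intro U x
      by_cases hall : ∀ V ∈ Rem O (Fam O i φ.box) U, x ∈ V → Sat O i x V φ.box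
      · exact Or.inl hall
      · right
        push_neg at hall
        obtain ⟨V₂, hV₂, hxV₂, hnB⟩ := hall
        intro V₁ hV₁ hxV₁ hB
        have hnB' : ¬ ∀ V' ∈ O, x ∈ V' → V' ⊆ V₂ → Sat O i x V' φ := hnB
        push_neg at hnB'
        obtain ⟨V', hV'O, hxV', hV'V₂, hbad⟩ := hnB'
        have hB' : ∀ V ∈ O, x ∈ V → V ⊆ V₁ → Sat O i x V φ := hB
        rcases chain_of_mem hT hV'O hV₁.1.1 hxV' hxV₁ with h | h
        · exact hbad (hB' V' hV'O hxV' h)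
        · have hV'R : V' ∈ Rem O (Fam O i φ.box) U := rem_sandwich hV₁ hV₂ hV'O h hV'V₂
          rcases hs U x with hst | hst
          · exact hbad (hst V' hV'R hxV')
          · exact hst V₁ hV₁ hxV₁ (hB' V₁ hV₁.1.1 hxV₁ subset_rfl)

end PartitionAux

/-- Partition Theorem: every treelike model admits a family of finite stable
partitions, one for each formula, monotone along the subformula relation. -/
theorem partition_theorem {X α : Type} (O : Set (Set X)) (i : α → Set X)
    (hT : Treelike O) :
    ∃ F : Fml α → Set (Set X),
      ∀ ψ : Fml α,
        (F ψ).Finite ∧ Set.univ ∈ F ψ ∧ InterClosed (F ψ) ∧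
          (∀ U ∈ F ψ, Stable O i (Rem O (F ψ) U) ψ) ∧
          ∀ φ : Fml α, Subf φ ψ → F φ ⊆ F ψ := by
  refine ⟨PartitionAux.Fam O i, fun ψ => ?_⟩
  obtain ⟨hf, hu, hic, hs⟩ := PartitionAux.fam_spec O i hT ψ
  exact ⟨hf, hu, hic, fun U _ => hs U, fun φ h => PartitionAux.fam_mono h⟩
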